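/- For every positive integer n, either C₁(ℚⁿ) = n + 1 or C₁(ℚⁿ) = n, where C₁(ℚⁿ) is the maximum m such that there exist m points of ℚⁿ that are pairwise equidistant (at some common positive distance). Moreover C₁(ℚⁿ) = n + 1 if and only if one of the following holds: (i) n is even and n+1 is a perfect square; (ii) n ≡ 3 (mod 4); (iii) n ≡ 1 (mod 4) and n+1 is a sum of two integer squares. -/

import Mathlib

/-- `hasCliqueQ n m d` : there exist `m` points of `ℚⁿ` pairwise at squared
Euclidean distance `d`. -/
def hasCliqueQ (n m : ℕ) (d : ℚ) : Prop :=
  ∃ p : Fin m → (Fin n → ℚ), ∀ i j, i ≠ j → ∑ k, (p i k - p j k) ^ 2 = d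

/-- `hasSimplexQ n m` : there exist `m` pairwise equidistant points of `ℚⁿ`
(at some common positive distance). -/
def hasSimplexQ (n m : ℕ) : Prop := ∃ d : ℚ, 0 < d ∧ hasCliqueQ n m d


namespace Sch

/-- dot product on `Fin k → ℚ`. -/
def dot {k : ℕ} (x y : Fin k → ℚ) : ℚ := ∑ t, x t * y t

lemma dot_comm {k : ℕ} (x y : Fin k → ℚ) : dot x y = dot y x := by
  unfold dot; exact Finset.sum_congr rfl fun t _ => mul_comm _ _

lemma dot_add_left {k : ℕ} (x y z : Fin k → ℚ) : dot (x + y) z = dot x z + dot y z := by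
  unfold dot; rw [← Finset.sum_add_distrib]
  exact Finset.sum_congr rfl fun t _ => by simp [add_mul]

lemma dot_sub_left {k : ℕ} (x y z : Fin k → ℚ) : dot (x - y) z = dot x z - dot y z := by
  unfold dot; rw [← Finset.sum_sub_distrib]
  exact Finset.sum_congr rfl fun t _ => by simp [sub_mul]

lemma dot_smul_left {k : ℕ} (c : ℚ) (x z : Fin k → ℚ) : dot (c • x) z = c * dot x z := by
  unfold dot; rw [Finset.mul_sum]
  exact Finset.sum_congr rfl fun t _ => by simp [mul_assoc]

lemma dot_smul_right {k : ℕ} (c : ℚ) (x z : Fin k → ℚ) : dot x (c • z) = c * dot x z := by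
  rw [dot_comm, dot_smul_left, dot_comm]

lemma dot_add_right {k : ℕ} (x y z : Fin k → ℚ) : dot z (x + y) = dot z x + dot z y := by
  rw [dot_comm, dot_add_left, dot_comm x z, dot_comm y z]

lemma dot_sub_right {k : ℕ} (x y z : Fin k → ℚ) : dot z (x - y) = dot z x - dot z y := by
  rw [dot_comm, dot_sub_left, dot_comm x z, dot_comm y z]

lemma dot_sum_left {k : ℕ} {ι : Type*} (s : Finset ι) (f : ι → Fin k → ℚ) (z : Fin k → ℚ) :
    dot (∑ i ∈ s, f i) z = ∑ i ∈ s, dot (f i) z := by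
  classical
  induction s using Finset.induction with
  | empty => simp [dot]
  | insert _ _ h ih => rw [Finset.sum_insert h, dot_add_left, ih, Finset.sum_insert h]

lemma dot_sum_right {k : ℕ} {ι : Type*} (s : Finset ι) (f : ι → Fin k → ℚ) (z : Fin k → ℚ) :
    dot z (∑ i ∈ s, f i) = ∑ i ∈ s, dot z (f i) := by
  rw [dot_comm, dot_sum_left]; exact Finset.sum_congr rfl fun i _ => dot_comm _ _

lemma dot_nonneg {k : ℕ} (x : Fin k → ℚ) : 0 ≤ dot x x :=
  Finset.sum_nonneg fun t _ => mul_self_nonneg _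

lemma distsq_eq (k : ℕ) (x y : Fin k → ℚ) : ∑ t, (x t - y t) ^ 2 = dot (x - y) (x - y) := by
  unfold dot; exact Finset.sum_congr rfl fun t _ => by simp [Pi.sub_apply]; ring

/-- polarization -/
lemma dot_polar {k : ℕ} (x y z : Fin k → ℚ) :
    dot (x - z) (y - z) =
      (dot (x - z) (x - z) + dot (y - z) (y - z) - dot (x - y) (x - y)) / 2 := by
  unfold dot
  rw [← Finset.sum_add_distrib, ← Finset.sum_sub_distrib, Finset.sum_div]
  exact Finset.sum_congr rfl fun t _ => by simp only [Pi.sub_apply]; ring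


/-- Part A : `n` basis vectors are pairwise at squared distance 2. -/
lemma partA (n : ℕ) : hasCliqueQ n n 2 := by
  refine ⟨fun i => Pi.single i 1, fun i j hij => ?_⟩
  have : ∀ k : Fin n, ((Pi.single i 1 : Fin n → ℚ) k - (Pi.single j 1 : Fin n → ℚ) k) ^ 2 =
      (if k = i then 1 else 0) + (if k = j then 1 else 0) := by
    intro k
    rcases eq_or_ne k i with rfl | hki <;> rcases eq_or_ne k j with rfl | hkj <;>
      simp_all [Pi.single_apply] <;> ring
  rw [Finset.sum_congr rfl fun k _ => this k, Finset.sum_add_distrib]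
  simp
  norm_num

/-- From a clique of size `m+1`, the difference vectors have Gram matrix `(d/2)(I+J)`. -/
lemma gram_of_clique {n m : ℕ} {d : ℚ} {p : Fin (m + 1) → Fin n → ℚ}
    (hp : ∀ i j, i ≠ j → ∑ k, (p i k - p j k) ^ 2 = d) (i j : Fin m) :
    dot (p i.succ - p 0) (p j.succ - p 0) = if i = j then d else d / 2 := by
  have hd : ∀ i j : Fin (m+1), i ≠ j → dot (p i - p j) (p i - p j) = d := by
    intro i j hij; rw [← distsq_eq]; exact hp i j hij
  rcases eq_or_ne i j with rfl | hij
  · simp [hd i.succ 0 (Fin.succ_ne_zero i)]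
  · have h1 : (i.succ : Fin (m+1)) ≠ j.succ := fun h => hij (Fin.succ_injective _ h)
    rw [dot_polar, hd i.succ 0 (Fin.succ_ne_zero i), hd j.succ 0 (Fin.succ_ne_zero j),
      hd i.succ j.succ h1]
    simp [hij]

/-- Part B : there are no `n+2` pairwise equidistant points in `ℚⁿ`. -/
lemma partB (n : ℕ) {d : ℚ} (hd : 0 < d) : ¬ hasCliqueQ n (n + 2) d := by
  rintro ⟨p, hp⟩
  set w : Fin (n+1) → Fin n → ℚ := fun i => p i.succ - p 0 with hw
  have hgram : ∀ i j, dot (w i) (w j) = if i = j then d else d / 2 :=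
    fun i j => gram_of_clique hp i j
  have hli : LinearIndependent ℚ w := by
    rw [Fintype.linearIndependent_iff]
    intro g hg
    set S := ∑ i, g i with hS
    have key : ∀ j, d / 2 * (S + g j) = 0 := by
      intro j
      have h0 : dot (w j) (∑ i, g i • w i) = 0 := by
        rw [hg]; simp [dot]
      rw [dot_sum_right] at h0
      have : ∀ i, dot (w j) (g i • w i) = g i * (if j = i then d else d / 2) := by
        intro i; rw [dot_smul_right, hgram]
      rw [Finset.sum_congr rfl fun i _ => this i] at h0
      have expand : ∀ i : Fin (n+1), g i * (if j = i then d else d / 2)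
          = g i * (d/2) + (if j = i then g i * (d/2) else 0) := by
        intro i; rcases eq_or_ne j i with rfl | hji
        · simp; ring
        · simp [hji]
      rw [Finset.sum_congr rfl fun i _ => expand i, Finset.sum_add_distrib,
        Finset.sum_ite_eq (Finset.univ) j (fun i => g i * (d/2))] at h0
      simp only [Finset.mem_univ, if_true, ← Finset.sum_mul] at h0
      rw [mul_comm] at h0
      linear_combination h0
    have hgj : ∀ j, g j = -S := by
      intro j
      have := key j
      have hd2 : d / 2 ≠ 0 := by positivity
      have := mul_eq_zero.mp this
      rcases this with h | h
      · exact absurd h hd2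
      · linarith
    have hS0 : S = 0 := by
      have : S = ∑ _i : Fin (n+1), (-S) := by
        rw [hS]; exact Finset.sum_congr rfl fun i _ => hgj i
      simp at this
      have : S * (1 + (n+1)) = 0 := by push_cast at this ⊢; linarith
      rcases mul_eq_zero.mp this with h | h
      · exact h
      · exfalso
        have : (0:ℚ) < 1 + (n+1) := by positivity
        rw [h] at this; exact lt_irrefl 0 this
    intro j; rw [hgj j, hS0, neg_zero]
  have hcard := hli.fintype_card_le_finrank
  rw [Fintype.card_fin, Module.finrank_fin_fun] at hcard
  omega


section Reflect

variable {k : ℕ}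

/-- standard basis vector `e₀`. -/
def e0 (k : ℕ) : Fin (k+1) → ℚ := Pi.single 0 1

lemma dot_e0 (x : Fin (k+1) → ℚ) : dot x (e0 k) = x 0 := by
  unfold dot e0
  rw [Finset.sum_eq_single 0]
  · simp
  · intro b _ hb; simp [Pi.single_apply, hb]
  · simp

lemma e0_dot (x : Fin (k+1) → ℚ) : dot (e0 k) x = x 0 := by rw [dot_comm, dot_e0]

/-- sign used in the Householder reflection. -/
def sig (u : Fin (k+1) → ℚ) : ℚ := if 0 ≤ u 0 then 1 else -1

lemma sig_mul_self (u : Fin (k+1) → ℚ) : sig u * sig u = 1 := by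
  unfold sig; split <;> norm_num

lemma sig_nonneg (u : Fin (k+1) → ℚ) : 0 ≤ sig u * u 0 := by
  unfold sig; split
  · simpa
  · rename_i h; push_neg at h; nlinarith

/-- the Householder vector. -/
def wvec (u : Fin (k+1) → ℚ) : Fin (k+1) → ℚ := u + sig u • e0 k

lemma dot_wvec (x u : Fin (k+1) → ℚ) : dot x (wvec u) = dot x u + sig u * x 0 := by
  unfold wvec; rw [dot_add_right, dot_smul_right, dot_e0]

lemma wvec_self (u : Fin (k+1) → ℚ) (hu : dot u u = 1) :
    dot (wvec u) (wvec u) = 2 * (1 + sig u * u 0) := by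
  unfold wvec
  rw [dot_add_left, dot_add_right, dot_add_right, dot_smul_left, dot_smul_right,
    dot_smul_left, dot_smul_right, dot_e0, e0_dot, hu]
  have h0 : dot (e0 k) (e0 k) = 1 := by rw [dot_e0]; unfold e0; simp
  rw [h0]
  have := sig_mul_self u
  ring_nf
  nlinarith [sig_mul_self u]

lemma wvec_pos (u : Fin (k+1) → ℚ) (hu : dot u u = 1) : 0 < dot (wvec u) (wvec u) := by
  rw [wvec_self u hu]
  have := sig_nonneg u
  linarith

/-- Householder reflection sending `u` to `-(sig u) • e₀`. -/
def refl (u x : Fin (k+1) → ℚ) : Fin (k+1) → ℚ :=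
  x - (2 * dot x (wvec u) / dot (wvec u) (wvec u)) • wvec u

lemma refl_sub (u x y : Fin (k+1) → ℚ) : refl u x - refl u y = refl u (x - y) := by
  unfold refl
  rw [dot_sub_left]
  ext t
  simp only [Pi.sub_apply, Pi.smul_apply, smul_eq_mul]
  ring

lemma refl_dot (u x y : Fin (k+1) → ℚ) (hu : dot u u = 1) :
    dot (refl u x) (refl u y) = dot x y := by
  have hW := (wvec_pos u hu).ne'
  unfold refl
  rw [dot_sub_left, dot_sub_right, dot_sub_right, dot_smul_left, dot_smul_right,
    dot_smul_left, dot_smul_right, dot_comm (wvec u) y]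
  field_simp
  ring

lemma dot_u_wvec (u : Fin (k+1) → ℚ) (hu : dot u u = 1) :
    dot u (wvec u) = 1 + sig u * u 0 := by
  rw [dot_wvec, hu]

lemma refl_u (u : Fin (k+1) → ℚ) (hu : dot u u = 1) : refl u u = (-(sig u)) • e0 k := by
  unfold refl
  rw [dot_u_wvec u hu, wvec_self u hu]
  have h1 : 2 * (1 + sig u * u 0) / (2 * (1 + sig u * u 0)) = 1 := by
    have := wvec_pos u hu; rw [wvec_self u hu] at this
    field_simp
    exact div_self (by linarith)
  rw [h1, one_smul]
  unfold wvec
  ext t; simp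

/-- a vector orthogonal to `u` gets `0` first coordinate after reflection. -/
lemma refl_coord0 (u x : Fin (k+1) → ℚ) (hu : dot u u = 1) (hx : dot x u = 0) :
    refl u x 0 = 0 := by
  have h1 : dot (refl u x) (refl u u) = 0 := by rw [refl_dot _ _ _ hu, hx]
  rw [refl_u u hu, dot_smul_right, dot_e0] at h1
  rcases mul_eq_zero.mp h1 with h | h
  · exfalso; unfold sig at h; revert h; split <;> norm_num
  · exact h

end Reflect


/-- an orthogonal frame of norm `c` vectors. -/
def StdRep (m k : ℕ) (c : ℚ) : Prop :=
  ∃ v : Fin m → Fin k → ℚ, ∀ i j, dot (v i) (v j) = if i = j then c else 0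

/-- Key glue: an orthogonal frame of `n+1` vectors of norm `n+1` in `ℚ^{n+1}`
gives `n+1` equidistant points in `ℚⁿ`. -/
lemma keyToSimplex (n : ℕ) (h : StdRep (n+1) (n+1) ((n:ℚ)+1)) :
    hasCliqueQ n (n+1) (2*((n:ℚ)+1)) := by
  obtain ⟨a, ha⟩ := h
  have hN : (0:ℚ) < (n:ℚ)+1 := by positivity
  set u : Fin (n+1) → ℚ := ((n:ℚ)+1)⁻¹ • ∑ i, a i with hu
  have hau : ∀ j, dot (a j) u = 1 := by
    intro j
    rw [hu, dot_smul_right, dot_sum_right, Finset.sum_congr rfl fun i _ => ha j i]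
    rw [Finset.sum_ite_eq Finset.univ j (fun _ => (n:ℚ)+1)]
    simp [hN.ne']
  have huu : dot u u = 1 := by
    have : dot u u = ((n:ℚ)+1)⁻¹ * ∑ i, dot (a i) u := by
      rw [hu, dot_smul_left, dot_sum_left]
    rw [this, Finset.sum_congr rfl fun i _ => hau i]
    simp [hN.ne']
  set q : Fin (n+1) → Fin (n+1) → ℚ := fun i => refl u (a i - a 0) with hq
  have hq0 : ∀ i, q i 0 = 0 := by
    intro i
    apply refl_coord0 u _ huu
    rw [dot_sub_left, hau, hau, sub_self]
  refine ⟨fun i t => q i t.succ, fun i j hij => ?_⟩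
  have hD : q i - q j = refl u (a i - a j) := by
    rw [hq]
    simp only
    rw [refl_sub, sub_sub_sub_cancel_right]
  have hdot : dot (q i - q j) (q i - q j) = 2*((n:ℚ)+1) := by
    rw [hD, refl_dot _ _ _ huu, dot_sub_left, dot_sub_right, dot_sub_right,
      ha, ha, ha, ha]
    simp [hij, (Ne.symm hij)]
    ring
  have hsum : ∑ t : Fin (n+1), ((q i - q j) t)^2 = 2*((n:ℚ)+1) := by
    rw [← hdot]
    unfold dot
    exact Finset.sum_congr rfl fun t _ => sq ((q i - q j) t)
  rw [Fin.sum_univ_succ] at hsum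
  have h00 : ((q i - q j) 0)^2 = 0 := by rw [Pi.sub_apply, hq0, hq0, sub_self]; simp
  rw [h00, zero_add] at hsum
  rw [← hsum]
  exact Finset.sum_congr rfl fun t _ => by simp


/-- diagonal frame: `StdRep m m (c^2)`. -/
lemma diagRep (m : ℕ) (c : ℚ) : StdRep m m (c^2) := by
  refine ⟨fun i => c • (Pi.single i 1 : Fin m → ℚ), fun i j => ?_⟩
  rw [dot_smul_left, dot_smul_right, ← mul_assoc, ← sq]
  unfold dot
  rcases eq_or_ne i j with rfl | hij
  · rw [if_pos rfl, Finset.sum_eq_single i]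
    · simp
    · intro b _ hb; simp [Pi.single_apply, hb]
    · simp
  · rw [if_neg hij]
    have : ∀ t, (Pi.single i 1 : Fin m → ℚ) t * (Pi.single j 1 : Fin m → ℚ) t = 0 := by
      intro t
      rcases eq_or_ne t i with rfl | hti
      · simp [Pi.single_apply, Ne.symm hij]
      · simp [Pi.single_apply, hti]
    rw [Finset.sum_congr rfl fun t _ => this t]
    simp

/-- block-diagonal construction. -/
lemma blockRep {b : ℕ} (B : Fin b → Fin b → ℚ) (c : ℚ)
    (hB : ∀ r s, (∑ t, B r t * B s t) = if r = s then c else 0) (m : ℕ) :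
    StdRep (m*b) (m*b) c := by
  set E := finProdFinEquiv (m := m) (n := b) with hE
  refine ⟨fun i t => if (E.symm i).1 = (E.symm t).1 then B (E.symm i).2 (E.symm t).2 else 0,
    fun i j => ?_⟩
  unfold dot
  rw [← Equiv.sum_comp E]
  simp only [Equiv.symm_apply_apply]
  rw [Fintype.sum_prod_type]
  have hij : (i = j) ↔ ((E.symm i).1 = (E.symm j).1 ∧ (E.symm i).2 = (E.symm j).2) := by
    constructor
    · rintro rfl; exact ⟨rfl, rfl⟩
    · rintro ⟨h1, h2⟩
      have : E.symm i = E.symm j := Prod.ext h1 h2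
      exact E.symm.injective this
  rcases eq_or_ne (E.symm i).1 (E.symm j).1 with h1 | h1
  · rw [Finset.sum_eq_single (E.symm i).1]
    · rw [Finset.sum_congr rfl (fun r _ => by rw [if_pos rfl, if_pos h1.symm]), hB]
      rcases eq_or_ne (E.symm i).2 (E.symm j).2 with h2 | h2
      · rw [if_pos h2, if_pos (hij.mpr ⟨h1, h2⟩)]
      · rw [if_neg h2, if_neg (fun hh => h2 (hij.mp hh).2)]
    · intro q _ hq
      apply Finset.sum_eq_zero
      intro r _
      rw [if_neg (fun hh => hq hh.symm)]
      simp
    · intro h; exact absurd (Finset.mem_univ _) h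
  · rw [if_neg (fun hh => h1 (hij.mp hh).1)]
    apply Finset.sum_eq_zero
    intro q _
    apply Finset.sum_eq_zero
    intro r _
    rcases eq_or_ne ((E.symm i).1) q with h2 | h2
    · have h3 : ¬ ((E.symm j).1 = q) := fun hh => h1 (h2.trans hh.symm)
      rw [if_neg h3, mul_zero]
    · rw [if_neg h2, zero_mul]

/-- the quaternion 4×4 frame. -/
lemma quatRep (a b c d N : ℚ) (h : a^2+b^2+c^2+d^2 = N) :
    ∀ r s, (∑ t, (![![a,b,c,d],![-b,a,-d,c],![-c,d,a,-b],![-d,-c,b,a]] : Fin 4 → Fin 4 → ℚ) r t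
      * ![![a,b,c,d],![-b,a,-d,c],![-c,d,a,-b],![-d,-c,b,a]] s t) = if r = s then N else 0 := by
  intro r s
  fin_cases r <;> fin_cases s <;>
    simp [Fin.sum_univ_four] <;> linarith [h]

/-- the 2×2 two-squares frame. -/
lemma twoRep (a b N : ℚ) (h : a^2+b^2 = N) :
    ∀ r s, (∑ t, (![![a,b],![-b,a]] : Fin 2 → Fin 2 → ℚ) r t
      * ![![a,b],![-b,a]] s t) = if r = s then N else 0 := by
  intro r s
  fin_cases r <;> fin_cases s <;>
    simp [Fin.sum_univ_two] <;> linarith [h]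


lemma dot_tail {k : ℕ} (x y : Fin (k+1) → ℚ) (hx : x 0 = 0) :
    dot (fun t : Fin k => x t.succ) (fun t : Fin k => y t.succ) = dot x y := by
  unfold dot
  rw [Fin.sum_univ_succ (f := fun t => x t * y t), hx, zero_mul, zero_add]

/-- peel off orthonormal vectors one at a time via reflections. -/
lemma stepDownMulti (c : ℚ) : ∀ (j m k : ℕ),
    (∃ (v : Fin m → Fin (k+j) → ℚ) (u : Fin j → Fin (k+j) → ℚ),
      (∀ i i', dot (v i) (v i') = if i = i' then c else 0) ∧
      (∀ r s, dot (u r) (u s) = if r = s then 1 else 0) ∧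
      (∀ i r, dot (v i) (u r) = 0)) → StdRep m k c := by
  intro j
  induction j with
  | zero => rintro m k ⟨v, _, hv, _, _⟩; exact ⟨v, hv⟩
  | succ j ih =>
    rintro m k ⟨v, u, hv, hu, hvu⟩
    set uh : Fin ((k+j)+1) → ℚ := u (Fin.last j) with hud
    have huh : dot uh uh = 1 := by rw [hud, hu]; simp
    have hlast : ∀ r : Fin j, r.castSucc ≠ Fin.last j := fun r => (Fin.castSucc_lt_last r).ne
    apply ih m k
    refine ⟨fun i => fun t : Fin (k+j) => refl uh (v i) t.succ,
            fun r => fun t : Fin (k+j) => refl uh (u r.castSucc) t.succ, ?_, ?_, ?_⟩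
    · intro i i'
      rw [dot_tail _ _ (refl_coord0 uh (v i) huh (hvu i (Fin.last j))),
        refl_dot _ _ _ huh, hv]
    · intro r s
      rw [dot_tail _ _ (refl_coord0 uh (u r.castSucc) huh (by rw [hu, if_neg (hlast r)])),
        refl_dot _ _ _ huh, hu]
      rcases eq_or_ne r s with rfl | hrs
      · simp
      · rw [if_neg hrs, if_neg (fun hh => hrs (Fin.castSucc_injective _ hh))]
    · intro i r
      rw [dot_tail _ _ (refl_coord0 uh (v i) huh (hvu i (Fin.last j))),
        refl_dot _ _ _ huh, hvu]

lemma quatRepCol (a b c d N : ℚ) (h : a^2+b^2+c^2+d^2 = N) :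
    ∀ r s, (∑ t, (![![a,b,c,d],![-b,a,-d,c],![-c,d,a,-b],![-d,-c,b,a]] : Fin 4 → Fin 4 → ℚ) t r
      * ![![a,b,c,d],![-b,a,-d,c],![-c,d,a,-b],![-d,-c,b,a]] t s) = if r = s then N else 0 := by
  intro r s
  fin_cases r <;> fin_cases s <;>
    simp [Fin.sum_univ_four] <;> linarith [h]

/-- cancel a block of four. -/
lemma drop4 (m k : ℕ) (c : ℚ) (hc : 0 < c) (a b e f : ℚ) (habc : a^2+b^2+e^2+f^2 = c)
    (h : StdRep (m+4) (k+4) c) : StdRep m k c := by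
  obtain ⟨v, hv⟩ := h
  set Q : Fin 4 → Fin 4 → ℚ := ![![a,b,e,f],![-b,a,-f,e],![-e,f,a,-b],![-f,-e,b,a]] with hQd
  have hQcol := quatRepCol a b e f c habc
  set x : Fin m → Fin (k+4) → ℚ := fun i => v (Fin.castAdd 4 i) with hx
  set y : Fin 4 → Fin (k+4) → ℚ := fun r => v (Fin.natAdd m r) with hy
  have hne : ∀ (i : Fin m) (r : Fin 4), Fin.castAdd 4 i ≠ Fin.natAdd m r := by
    intro i r hh
    have := congrArg Fin.val hh
    simp [Fin.coe_castAdd, Fin.coe_natAdd] at this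
    omega
  set u : Fin 4 → Fin (k+4) → ℚ := fun r => c⁻¹ • ∑ s, Q s r • y s with hu
  apply stepDownMulti c 4 m k
  refine ⟨x, u, ?_, ?_, ?_⟩
  · intro i i'
    rw [hx]
    simp only
    rw [hv]
    rcases eq_or_ne i i' with rfl | hii
    · simp
    · rw [if_neg hii, if_neg (fun hh => hii (Fin.castAdd_injective m 4 hh))]
  · intro r s
    rw [hu]
    simp only
    rw [dot_smul_left, dot_smul_right, dot_sum_left]
    have inner : ∀ s' : Fin 4, dot (Q s' r • y s') (∑ s'', Q s'' s • y s'')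
        = Q s' r * Q s' s * c := by
      intro s'
      rw [dot_sum_right]
      have : ∀ s'' : Fin 4, dot (Q s' r • y s') (Q s'' s • y s'')
          = Q s' r * Q s'' s * (if s' = s'' then c else 0) := by
        intro s''
        rw [dot_smul_left, dot_smul_right, hy]
        simp only
        rw [hv]
        rcases eq_or_ne s' s'' with rfl | hss
        · simp [mul_assoc]
        · rw [if_neg (fun hh => hss (by
            have := congrArg Fin.val hh
            simp only [Fin.coe_natAdd] at this
            exact Fin.ext (by omega))), if_neg hss]
          ring
      rw [Finset.sum_congr rfl fun s'' _ => this s'', Finset.sum_eq_single s']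
      · simp
      · intro b _ hb; rw [if_neg (Ne.symm hb), mul_zero]
      · simp
    rw [Finset.sum_congr rfl fun s' _ => inner s']
    rw [← Finset.sum_mul, hQcol]
    rcases eq_or_ne r s with rfl | hrs
    · rw [if_pos rfl, if_pos rfl]
      field_simp
    · rw [if_neg hrs, if_neg hrs]
      simp
  · intro i r
    rw [hu, hx]
    simp only
    rw [dot_smul_right, dot_sum_right]
    have : ∀ s : Fin 4, dot (v (Fin.castAdd 4 i)) (Q s r • y s) = 0 := by
      intro s
      rw [dot_smul_right, hy]
      simp only
      rw [hv, if_neg (hne i s), mul_zero]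
    rw [Finset.sum_congr rfl fun s _ => this s]
    simp

/-- iterated cancellation. -/
lemma descend (c : ℚ) (hc : 0 < c) (a b e f : ℚ) (habc : a^2+b^2+e^2+f^2 = c) :
    ∀ (t m k : ℕ), StdRep (m+4*t) (k+4*t) c → StdRep m k c := by
  intro t
  induction t with
  | zero => intro m k h; simpa using h
  | succ t ih =>
    intro m k h
    have e1 : m+4*(t+1) = (m+4)+4*t := by ring
    have e2 : k+4*(t+1) = (k+4)+4*t := by ring
    rw [e1, e2] at h
    exact drop4 m k c hc a b e f habc (ih (m+4) (k+4) h)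


/-- a natural number that is a rational square is a square. -/
lemma natSq (N : ℕ) (q : ℚ) (h : q^2 = (N:ℚ)) : ∃ c : ℕ, N = c^2 := by
  have hden : q.den = 1 := by
    have h1 : (q^2).den = 1 := by rw [h]; exact Rat.den_natCast N
    rw [Rat.den_pow] at h1
    nlinarith [q.pos]
  have hq : (q.num : ℚ) = q := by
    conv_rhs => rw [← Rat.num_div_den q]
    rw [hden]; simp
  have h2 : ((q.num^2 : ℤ) : ℚ) = ((N:ℤ) : ℚ) := by push_cast; rw [← hq] at h; push_cast at h; exact_mod_cast h
  have h3 : q.num^2 = (N:ℤ) := by exact_mod_cast h2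
  refine ⟨q.num.natAbs, ?_⟩
  zify
  push_cast
  rw [sq_abs]
  exact h3.symm

/-- a natural number that is a sum of two rational squares is a sum of two natural squares. -/
lemma natTwoSq (N : ℕ) (x y : ℚ) (h : (N:ℚ) = x^2 + y^2) : ∃ a b : ℕ, N = a^2 + b^2 := by
  rcases Nat.eq_zero_or_pos N with rfl | hN
  · exact ⟨0, 0, rfl⟩
  set X : ℤ := x.num * (y.den : ℤ) with hX
  set Y : ℤ := y.num * (x.den : ℤ) with hY
  set D : ℕ := x.den * y.den with hD
  have hD0 : D ≠ 0 := by positivity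
  have hxd : ((x.den : ℚ)) ≠ 0 := by exact_mod_cast x.den_nz
  have hyd : ((y.den : ℚ)) ≠ 0 := by exact_mod_cast y.den_nz
  have hxq : (x.num : ℚ) = x * (x.den : ℚ) := by
    nth_rewrite 2 [← Rat.num_div_den x]
    rw [div_mul_cancel₀ _ hxd]
  have hyq : (y.num : ℚ) = y * (y.den : ℚ) := by
    nth_rewrite 2 [← Rat.num_div_den y]
    rw [div_mul_cancel₀ _ hyd]
  have key : ((N * D^2 : ℕ) : ℚ) = ((X^2 + Y^2 : ℤ) : ℚ) := by
    push_cast [hX, hY, hD]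
    rw [hxq, hyq, h]
    ring
  have keyZ : (N * D^2 : ℕ) = (X^2 + Y^2 : ℤ) := by exact_mod_cast key
  have keyN : N * D^2 = X.natAbs^2 + Y.natAbs^2 := by
    zify
    push_cast
    rw [sq_abs, sq_abs]
    exact_mod_cast keyZ
  have hchar := (Nat.eq_sq_add_sq_iff (n := N * D^2)).mpr
  have hfor : ∀ {q : ℕ}, q.Prime → q % 4 = 3 → Even (padicValNat q (N * D^2)) := fun {q} hq hq4 => by
    by_cases hdvd : q ∣ N * D^2
    · exact (Nat.eq_sq_add_sq_iff (n := N * D^2)).mp ⟨X.natAbs, Y.natAbs, keyN⟩ q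
        (Nat.mem_primeFactors.mpr ⟨hq, hdvd, mul_ne_zero hN.ne' (pow_ne_zero _ hD0)⟩) hq4
    · rw [padicValNat.eq_zero_of_not_dvd hdvd]; exact ⟨0, rfl⟩
  apply (Nat.eq_sq_add_sq_iff (n := N)).mpr
  intro q hq0 hq4
  have hq := (Nat.mem_primeFactors.mp hq0).1
  haveI : Fact q.Prime := ⟨hq⟩
  have hD2 : D^2 ≠ 0 := by positivity
  have := hfor hq hq4
  rw [padicValNat.mul (p := q) hN.ne' hD2, padicValNat.pow _ 2] at this
  rcases this with ⟨w, hw⟩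
  have : Even (padicValNat q N) := by
    rcases Nat.even_or_odd (padicValNat q N) with he | ho
    · exact he
    · exfalso
      rcases ho with ⟨v, hv⟩
      omega
  exact this


lemma dot_zero_left {k : ℕ} (x : Fin k → ℚ) : dot 0 x = 0 := by
  unfold dot; simp

lemma dot_zero_right {k : ℕ} (x : Fin k → ℚ) : dot x 0 = 0 := by
  unfold dot; simp

/-- determinant of the Gram matrix of the edge vectors. -/
lemma detArg {n : ℕ} {d : ℚ} (w : Fin n → Fin n → ℚ)
    (hw : ∀ i j, dot (w i) (w j) = if i = j then d else d / 2) :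
    ∃ r : ℚ, r^2 = (d/2)^n * ((n:ℚ)+1) := by
  classical
  set J : Matrix (Fin n) (Fin n) ℚ :=
    Matrix.replicateCol Unit (fun _ : Fin n => (1:ℚ)) * Matrix.replicateRow Unit (fun _ : Fin n => (1:ℚ)) with hJ
  set M : Matrix (Fin n) (Fin n) ℚ := Matrix.of (fun i j => w i j) with hM
  have hJapp : ∀ i j, J i j = 1 := by
    intro i j
    rw [hJ, Matrix.mul_apply]
    simp
  have hMM : M * M.transpose = (d/2) • ((1 : Matrix (Fin n) (Fin n) ℚ) + J) := by
    ext i j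
    rw [Matrix.mul_apply]
    have hlhs : ∑ k, M i k * M.transpose k j = dot (w i) (w j) := by
      unfold dot
      exact Finset.sum_congr rfl fun k _ => by simp [hM, Matrix.transpose_apply]
    rw [hlhs, hw, Matrix.smul_apply, Matrix.add_apply, hJapp, Matrix.one_apply, smul_eq_mul]
    rcases eq_or_ne i j with rfl | hij
    · rw [if_pos rfl, if_pos rfl]; ring
    · rw [if_neg hij, if_neg hij]; ring
  refine ⟨M.det, ?_⟩
  have h1 : (M * M.transpose).det = M.det ^ 2 := by
    rw [Matrix.det_mul, Matrix.det_transpose, sq]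
  have h2 : ((d/2) • ((1 : Matrix (Fin n) (Fin n) ℚ) + J)).det = (d/2)^n * ((n:ℚ)+1) := by
    rw [Matrix.det_smul, hJ, Matrix.det_one_add_replicateCol_mul_replicateRow]
    have hdp : dotProduct (fun _ : Fin n => (1:ℚ)) (fun _ : Fin n => (1:ℚ)) = (n:ℚ) := by
      simp [dotProduct]
    rw [hdp, Fintype.card_fin]
    ring
  rw [← h1, hMM, h2]

/-- expansion of dot of differences. -/
lemma dot_expand {k : ℕ} (x y z : Fin k → ℚ) :
    dot (x - z) (y - z) = dot x y - dot x z - dot z y + dot z z := by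
  rw [dot_sub_left, dot_sub_right, dot_sub_right, dot_comm z y]
  ring

lemma dot_cons {k : ℕ} (s t : ℚ) (x y : Fin k → ℚ) :
    dot (Fin.cons s x) (Fin.cons t y) = s * t + dot x y := by
  unfold dot
  rw [Fin.sum_univ_succ]
  simp

/-- a rational regular simplex with `n+1` vertices in `ℚⁿ`, `n` odd, yields an
orthogonal frame of norm `n+1` in `ℚ^{n+1}`. -/
lemma simplexToFrame {n : ℕ} (hodd : n % 2 = 1) {d : ℚ} (hd : 0 < d)
    (p : Fin (n+1) → Fin n → ℚ) (hp : ∀ i j, i ≠ j → ∑ k, (p i k - p j k)^2 = d) :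
    StdRep (n+1) (n+1) ((n:ℚ)+1) := by
  set w : Fin n → Fin n → ℚ := fun i => p i.succ - p 0 with hwdef
  have hw : ∀ i j, dot (w i) (w j) = if i = j then d else d/2 := fun i j => gram_of_clique hp i j
  obtain ⟨r, hr⟩ := detArg w hw
  have hN : (0:ℚ) < (n:ℚ)+1 := by positivity
  have hd2 : (0:ℚ) < d/2 := by linarith
  have hdn : (0:ℚ) < (d/2)^n := pow_pos hd2 n
  have hr0 : r ≠ 0 := by
    intro h0
    rw [h0] at hr
    nlinarith [hdn, hN, hr]
  set l : ℚ := (((n:ℚ)+1) * (d/2)^((n-1)/2)) / r with hl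
  have hpow : ((d/2)^((n-1)/2))^2 * (d/2) = (d/2)^n := by
    rw [← pow_mul, ← pow_succ]
    congr 1
    omega
  have hl2 : l^2 * (d/2) = (n:ℚ)+1 := by
    have step : l^2 * (d/2) = (((n:ℚ)+1)^2 * (((d/2)^((n-1)/2))^2 * (d/2))) / r^2 := by
      rw [hl, div_pow, mul_pow]
      ring
    rw [step, hpow, hr]
    field_simp
  set m' : Fin n → Fin n → ℚ := fun i => l • w i with hm'def
  have hm' : ∀ i j, dot (m' i) (m' j) =
      if i = j then 2*((n:ℚ)+1) else ((n:ℚ)+1) := by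
    intro i j
    rw [hm'def]
    simp only
    rw [dot_smul_left, dot_smul_right, hw, ← mul_assoc, ← sq]
    rcases eq_or_ne i j with rfl | hij
    · rw [if_pos rfl, if_pos rfl]
      nlinarith [hl2]
    · rw [if_neg hij, if_neg hij]
      nlinarith [hl2]
  set cc : Fin n → ℚ := (((n:ℚ)+1))⁻¹ • ∑ j, m' j with hccdef
  have hmcc : ∀ i, dot (m' i) cc = (n:ℚ)+1 := by
    intro i
    rw [hccdef, dot_smul_right, dot_sum_right, Finset.sum_congr rfl fun j _ => hm' i j]
    have : ∑ j : Fin n, (if i = j then 2*((n:ℚ)+1) else ((n:ℚ)+1))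
        = ∑ j : Fin n, (((n:ℚ)+1) + if i = j then ((n:ℚ)+1) else 0) := by
      refine Finset.sum_congr rfl fun j _ => ?_
      rcases eq_or_ne i j with rfl | hij
      · simp; ring
      · simp [hij]
    rw [this, Finset.sum_add_distrib, Finset.sum_ite_eq Finset.univ i fun _ => ((n:ℚ)+1)]
    simp only [Finset.sum_const, Finset.card_univ, Fintype.card_fin, nsmul_eq_mul,
      Finset.mem_univ, if_true]
    field_simp
  have hcccc : dot cc cc = (n:ℚ) := by
    nth_rewrite 1 [hccdef]
    rw [dot_smul_left, dot_sum_left, Finset.sum_congr rfl fun j _ => hmcc j]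
    simp only [Finset.sum_const, Finset.card_univ, Fintype.card_fin, nsmul_eq_mul]
    field_simp
  set q : Fin (n+1) → Fin n → ℚ := fun i => Fin.cases (0 : Fin n → ℚ) m' i with hqdef
  set g : Fin (n+1) → Fin n → ℚ := fun i => q i - cc with hgdef
  have hg : ∀ i j : Fin (n+1), dot (g i) (g j) = (if i = j then ((n:ℚ)+1) else 0) - 1 := by
    intro i j
    rw [hgdef]
    simp only
    rw [dot_expand]
    induction i using Fin.cases with
    | zero =>
      induction j using Fin.cases with
      | zero =>
        rw [hqdef]
        simp only [Fin.cases_zero]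
        rw [dot_zero_left, dot_zero_left, dot_zero_right, hcccc, if_pos trivial]
        ring
      | succ j =>
        rw [hqdef]
        simp only [Fin.cases_zero, Fin.cases_succ]
        rw [dot_zero_left, dot_zero_left, dot_comm cc (m' j), hmcc, hcccc,
          if_neg (Ne.symm (Fin.succ_ne_zero j))]
        ring
    | succ i =>
      induction j using Fin.cases with
      | zero =>
        rw [hqdef]
        simp only [Fin.cases_zero, Fin.cases_succ]
        rw [dot_zero_right, hmcc, dot_zero_right, hcccc, if_neg (Fin.succ_ne_zero i)]
        ring
      | succ j =>
        rw [hqdef]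
        simp only [Fin.cases_succ]
        rw [hm', hmcc, dot_comm cc (m' j), hmcc, hcccc]
        rcases eq_or_ne i j with rfl | hij
        · rw [if_pos rfl, if_pos rfl]
          ring
        · rw [if_neg hij, if_neg (fun hh => hij (Fin.succ_injective n hh))]
          ring
  refine ⟨fun i => Fin.cons 1 (g i), fun i j => ?_⟩
  rw [dot_cons, hg]
  ring

end Sch

theorem stmt_14' (n : ℕ) (hn : 0 < n) :
    hasCliqueQ n n 2 ∧ (∀ d : ℚ, 0 < d → ¬ hasCliqueQ n (n + 2) d) ∧
      ((∃ d : ℚ, 0 < d ∧ hasCliqueQ n (n + 1) d) ↔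
        ((Even n ∧ ∃ c : ℕ, n + 1 = c ^ 2) ∨ n % 4 = 3 ∨
          (n % 4 = 1 ∧ ∃ a b : ℤ, (n : ℤ) + 1 = a ^ 2 + b ^ 2))) := by
  refine ⟨Sch.partA n, fun d hd => Sch.partB n hd, ?_, ?_⟩
  · -- forward
    rintro ⟨d, hd, p, hp⟩
    rcases Nat.even_or_odd n with heven | hodd
    · left
      refine ⟨heven, ?_⟩
      have hw := fun i j => Sch.gram_of_clique hp i j
      obtain ⟨r, hr⟩ := Sch.detArg _ hw
      have hd2 : (0:ℚ) < d/2 := by linarith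
      set s : ℚ := (d/2)^(n/2) with hs
      obtain ⟨k, hk⟩ := heven
      have hs2 : s^2 = (d/2)^n := by
        rw [hs, ← pow_mul]
        congr 1
        omega
      have hs0 : s ≠ 0 := pow_ne_zero _ (ne_of_gt hd2)
      have hq : ((r/s))^2 = ((n+1 : ℕ) : ℚ) := by
        push_cast
        rw [div_pow, hr, ← hs2]
        field_simp
      exact Sch.natSq (n+1) (r/s) hq
    · -- odd case
      have hodd' : n % 2 = 1 := Nat.odd_iff.mp hodd
      have hframe := Sch.simplexToFrame hodd' hd p hp
      have h14 : n % 4 = 1 ∨ n % 4 = 3 := by omega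
      rcases h14 with h1 | h3
      · right; right
        refine ⟨h1, ?_⟩
        have hE : n + 1 = 2 + 4*(n/4) := by omega
        rw [hE] at hframe
        obtain ⟨a, b, e, f, h4⟩ := Nat.sum_four_squares (n+1)
        have habcQ : ((a:ℚ))^2 + (b:ℚ)^2 + (e:ℚ)^2 + (f:ℚ)^2 = (n:ℚ)+1 := by
          exact_mod_cast h4
        have hNpos : (0:ℚ) < (n:ℚ)+1 := by positivity
        have h22 := Sch.descend ((n:ℚ)+1) hNpos _ _ _ _ habcQ (n/4) 2 2 hframe
        obtain ⟨v, hv⟩ := h22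
        have hvv := hv 0 0
        rw [if_pos rfl] at hvv
        have hsum : (n:ℚ)+1 = (v 0 0)^2 + (v 0 1)^2 := by
          rw [← hvv]
          unfold Sch.dot
          rw [Fin.sum_univ_two]
          ring
        obtain ⟨x, y, hxy⟩ := Sch.natTwoSq (n+1) _ _ (by push_cast; exact hsum)
        exact ⟨x, y, by exact_mod_cast hxy⟩
      · right; left; exact h3
  · -- backward
    rintro (⟨_, c, hc⟩ | h3 | ⟨_, a, b, hab⟩)
    · have hfr := Sch.diagRep (n+1) (c:ℚ)
      have hcq : ((c:ℚ))^2 = (n:ℚ)+1 := by exact_mod_cast hc.symm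
      rw [hcq] at hfr
      exact ⟨2*((n:ℚ)+1), by positivity, Sch.keyToSimplex n hfr⟩
    · obtain ⟨a, b, e, f, h4⟩ := Nat.sum_four_squares (n+1)
      have hB := Sch.quatRep (a:ℚ) (b:ℚ) (e:ℚ) (f:ℚ) ((n:ℚ)+1) (by exact_mod_cast h4)
      have hfr := Sch.blockRep _ _ hB ((n+1)/4)
      have hEq : ((n+1)/4)*4 = n+1 := Nat.div_mul_cancel (by omega)
      rw [hEq] at hfr
      exact ⟨2*((n:ℚ)+1), by positivity, Sch.keyToSimplex n hfr⟩
    · have hB := Sch.twoRep (a:ℚ) (b:ℚ) ((n:ℚ)+1) (by exact_mod_cast hab.symm)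
      have hfr := Sch.blockRep _ _ hB ((n+1)/2)
      have hEq : ((n+1)/2)*2 = n+1 := Nat.div_mul_cancel (by omega)
      rw [hEq] at hfr
      exact ⟨2*((n:ℚ)+1), by positivity, Sch.keyToSimplex n hfr⟩


/-- Schoenberg's theorem: for every positive `n`, the maximal number `C₁(ℚⁿ)` of
pairwise equidistant points of `ℚⁿ` is `n` or `n + 1`, and it equals `n + 1` exactly
when (i) `n` is even and `n+1` is a perfect square, or (ii) `n ≡ 3 (mod 4)`, or
(iii) `n ≡ 1 (mod 4)` and `n+1` is a sum of two integer squares. -/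
theorem stmt_14 (n : ℕ) (hn : 0 < n) :
    hasSimplexQ n n ∧ ¬ hasSimplexQ n (n + 2) ∧
      (hasSimplexQ n (n + 1) ↔
        ((Even n ∧ ∃ c : ℕ, n + 1 = c ^ 2) ∨ n % 4 = 3 ∨
          (n % 4 = 1 ∧ ∃ a b : ℤ, (n : ℤ) + 1 = a ^ 2 + b ^ 2))) := by
  obtain ⟨h1, h2, h3⟩ := stmt_14' n hn
  refine ⟨⟨2, by norm_num, h1⟩, ?_, h3⟩
  rintro ⟨d, hd, hc⟩
  exact h2 d hd hc
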